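/- Let B be a finite set, y ∈ R^B with Σ_a y_a = 1, and ξ ∈ Δ(B) a probability vector such that for each a ∈ B: if y_a < 0 then ξ_a = 0, and if y_a ≥ 0 then ξ_a ≤ y_a. Then ‖y − ξ‖₁ = d₁(y, Δ(B)). -/
import Mathlib


theorem simplex_projection_dist (B : Type*) [Fintype B]
    (y ξ : B → ℝ) (hy : ∑ a, y a = 1)
    (hξ : (∀ a, 0 ≤ ξ a) ∧ ∑ a, ξ a = 1)
    (hcond : ∀ a, (y a < 0 → ξ a = 0) ∧ (0 ≤ y a → ξ a ≤ y a)) :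
    ∑ a, |y a - ξ a| =
      sInf {d : ℝ | ∃ y' : B → ℝ, (∀ a, 0 ≤ y' a) ∧ (∑ a, y' a = 1) ∧
        d = ∑ a, |y a - y' a|} := by
  obtain ⟨hξ0, hξ1⟩ := hξ
  have hval : ∑ a, |y a - ξ a| = (∑ a, |y a|) - 1 := by
    have : ∀ a, |y a - ξ a| = |y a| - ξ a := by
      intro a
      rcases lt_or_ge (y a) 0 with h | h
      · rw [(hcond a).1 h]; simp
      · have h2 := (hcond a).2 h
        rw [abs_of_nonneg (by linarith [hξ0 a]), abs_of_nonneg h]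
    simp_rw [this, Finset.sum_sub_distrib, hξ1]
  have hlb : ∀ y' : B → ℝ, (∀ a, 0 ≤ y' a) → (∑ a, y' a = 1) →
      (∑ a, |y a|) - 1 ≤ ∑ a, |y a - y' a| := by
    intro y' h0 h1
    have : ∀ a, |y a| - y' a ≤ |y a - y' a| := by
      intro a
      have := abs_sub_abs_le_abs_sub (y a) (y' a)
      rw [abs_of_nonneg (h0 a)] at this
      linarith
    calc (∑ a, |y a|) - 1 = ∑ a, (|y a| - y' a) := by
          rw [Finset.sum_sub_distrib, h1]
      _ ≤ ∑ a, |y a - y' a| := Finset.sum_le_sum fun a _ => this a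
  apply le_antisymm
  · rw [hval]
    exact le_csInf ⟨_, ξ, hξ0, hξ1, rfl⟩ fun d ⟨y', h0, h1, hd⟩ => by
      rw [hd]; exact hlb y' h0 h1
  · exact csInf_le ⟨(∑ a, |y a|) - 1, fun d ⟨y', h0, h1, hd⟩ => by
      rw [hd]; exact hlb y' h0 h1⟩ ⟨ξ, hξ0, hξ1, rfl⟩
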